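/- arXiv:0908.2265 — 3 statements merged into one kernel-verified Lean document; each statement's English description precedes it below -/
import Mathlib

section
/- Divergence of generalized momenta (Lemma 2.1): Let U ⊆ ℝ⁴ be open with coordinates x⁰,…,x³, let μ̄ > 0 and V̄ be smooth functions on U, let Ḡ^{αβ} be a smooth symmetric (2,0)-tensor field on U, let X = X^α∂_α be a smooth vector field and q a smooth function on U, and for smooth ψ : U → ℝ define P^α_{(X,q)}[ψ] = (−Ḡ^{αγ}(∂_γψ)(∂_βψ) + (1/2)δ^α_β(Ḡ^{ρσ}(∂_ρψ)(∂_σψ) + V̄ψ²))X^β + Ḡ^{αβ}(−q(∂_βψ)ψ + (1/2)(∂_βq)ψ²) (summation over repeated indices). Then for every smooth solution ψ of μ̄⁻¹∂_α(μ̄Ḡ^{αβ}∂_βψ) − V̄ψ = 0, one has the pointwise identity μ̄⁻¹∂_α(μ̄ P^α_{(X,q)}[ψ]) = (−Ḡ^{αγ}(∂_γX^β) + (1/2)(∂_γX^γ)Ḡ^{αβ} + (1/2)μ̄⁻¹X^γ ∂_γ(μ̄Ḡ^{αβ}))(∂_αψ)(∂_βψ) + ((1/2)(∂_γX^γ)V̄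 + (1/2)μ̄⁻¹X^γ∂_γ(μ̄V̄))ψ² − q(Ḡ^{αβ}(∂_αψ)(∂_βψ) + V̄ψ²) + (1/2)μ̄⁻¹∂_α(μ̄Ḡ^{αβ}∂_βq)·ψ². -/
noncomputable section

open MeasureTheory Filter Topology

namespace KerrPaper

abbrev V4 : Type := Fin 4 → ℝ

/-- Partial derivative in the `i`-th coordinate (coordinates: 0 = t, 1 = r, 2 = θ, 3 = φ). -/
def pd (i : Fin 4) (ψ : V4 → ℝ) : V4 → ℝ :=
  fun x => deriv (fun s => ψ (Function.update x i s)) (x i)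

def rplus (M a : ℝ) : ℝ := M + Real.sqrt (M ^ 2 - a ^ 2)

def Δk (M a r : ℝ) : ℝ := r ^ 2 - 2 * M * r + a ^ 2

def SigK (a r θ : ℝ) : ℝ := r ^ 2 + a ^ 2 * Real.cos θ ^ 2

def PiK (M a r θ : ℝ) : ℝ := (r ^ 2 + a ^ 2) ^ 2 - a ^ 2 * Real.sin θ ^ 2 * Δk M a r

def ωH (M a : ℝ) : ℝ := a / (rplus M a ^ 2 + a ^ 2)

/-- The exterior region in Boyer–Lindquist coordinates `(t, r, θ, φ)`. -/
def ext (M a : ℝ) : Set V4 := {x | rplus M a < x 1 ∧ 0 < x 2 ∧ x 2 < Real.pi}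

/-- The Carter operator. -/
def carterQ (a : ℝ) (ψ : V4 → ℝ) : V4 → ℝ :=
  fun x =>
    (Real.sin (x 2))⁻¹ * pd 2 (fun y => Real.sin (y 2) * pd 2 ψ y) x +
      Real.cos (x 2) ^ 2 / Real.sin (x 2) ^ 2 * pd 3 (pd 3 ψ) x +
      a ^ 2 * Real.sin (x 2) ^ 2 * pd 0 (pd 0 ψ) x

/-- The operator ℛ(r; M, a; ∂_t, ∂_φ, Q). -/
def curlyR (M a : ℝ) (ψ : V4 → ℝ) : V4 → ℝ :=
  fun x =>
    -((x 1 ^ 2 + a ^ 2) ^ 2) * pd 0 (pd 0 ψ) x - 4 * a * M * x 1 * pd 0 (pd 3 ψ) x +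
      (Δk M a (x 1) - a ^ 2) * pd 3 (pd 3 ψ) x + Δk M a (x 1) * carterQ a ψ x

/-- The (rescaled) wave operator □ = Σ ∇^α∇_α. -/
def box (M a : ℝ) (ψ : V4 → ℝ) : V4 → ℝ :=
  fun x => pd 1 (fun y => Δk M a (y 1) * pd 1 ψ y) x + (Δk M a (x 1))⁻¹ * curlyR M a ψ x

/-- ψ is a smooth solution of the wave equation on the exterior region. -/
def IsWaveSol (M a : ℝ) (ψ : V4 → ℝ) : Prop :=
  ContDiffOn ℝ (⊤ : ℕ∞) ψ (ext M a) ∧ ∀ x ∈ ext M a, box M a ψ x = 0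

/-- G^{αβ} = Σ g^{αβ}, the rescaled inverse Kerr metric in BL coordinates. -/
def Ginv (M a r θ : ℝ) : Matrix (Fin 4) (Fin 4) ℝ :=
  !![-(PiK M a r θ) / Δk M a r, 0, 0, -(2 * a * M * r) / Δk M a r;
     0, Δk M a r, 0, 0;
     0, 0, 1, 0;
     -(2 * a * M * r) / Δk M a r, 0, 0,
       (Δk M a r - a ^ 2 * Real.sin θ ^ 2) / (Δk M a r * Real.sin θ ^ 2)]

/-- The momentum P_X^α[ψ]. -/
def momentum (M a : ℝ) (X : V4 → Fin 4 → ℝ) (ψ : V4 → ℝ) (α : Fin 4) : V4 → ℝ :=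
  fun x =>
    -(∑ γ, Ginv M a (x 1) (x 2) α γ * pd γ ψ x) * (∑ β, pd β ψ x * X x β) +
      (1 / 2) * X x α * ∑ ρ, ∑ σ, Ginv M a (x 1) (x 2) ρ σ * pd ρ ψ x * pd σ ψ x

/-- Parameter domain of a constant-t slice: (r, θ, φ). -/
def sliceSet (M a : ℝ) : Set (ℝ × ℝ × ℝ) :=
  Set.Ioi (rplus M a) ×ˢ Set.Ioo 0 Real.pi ×ˢ Set.Ioo 0 (2 * Real.pi)

def pt (t : ℝ) (p : ℝ × ℝ × ℝ) : V4 := ![t, p.1, p.2.1, p.2.2]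

/-- The energy E_X[ψ](t) = ∫ P_X^t[ψ] sinθ dr dθ dφ. -/
def energy (M a : ℝ) (X : V4 → Fin 4 → ℝ) (ψ : V4 → ℝ) (t : ℝ) : ℝ :=
  ∫ p in sliceSet M a, momentum M a X ψ 0 (pt t p) * Real.sin p.2.1

/-- χ is a smooth nonincreasing cutoff, ≡ 1 for r ≤ 10M and ≡ 0 for r ≥ 11M. -/
def IsCutoff (M : ℝ) (χ : ℝ → ℝ) : Prop :=
  ContDiff ℝ (⊤ : ℕ∞) χ ∧ Antitone χ ∧ (∀ r ≤ 10 * M, χ r = 1) ∧ ∀ r, 11 * M ≤ r → χ r = 0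

/-- The blended vector field T_χ = ∂_t + χ ω_H ∂_φ. -/
def Tchi (M a : ℝ) (χ : ℝ → ℝ) : V4 → Fin 4 → ℝ :=
  fun x => ![1, 0, 0, χ (x 1) * ωH M a]

/-- Triples (n_t, n_φ, n_Q) with n_t + n_φ + 2 n_Q ≤ n, indexing ∪_{i ≤ n} 𝕊_i. -/
def symTriples (n : ℕ) : Finset (ℕ × ℕ × ℕ) :=
  (Finset.range (n + 1) ×ˢ Finset.range (n + 1) ×ˢ Finset.range (n + 1)).filter
    fun m => m.1 + m.2.1 + 2 * m.2.2 ≤ n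

/-- The symmetry operator ∂_t^{n_t} ∂_φ^{n_φ} Q^{n_Q}. -/
def symOp (a : ℝ) (m : ℕ × ℕ × ℕ) (ψ : V4 → ℝ) : V4 → ℝ :=
  (pd 0)^[m.1] ((pd 3)^[m.2.1] ((carterQ a)^[m.2.2] ψ))

/-- The order-(n+1) energy E^{n+1}_X[ψ](t) = Σ_{i=0}^{n} Σ_{S ∈ 𝕊_i} E_X[Sψ](t). -/
def energyUpTo (M a : ℝ) (X : V4 → Fin 4 → ℝ) (n : ℕ) (ψ : V4 → ℝ) (t : ℝ) : ℝ :=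
  ∑ m ∈ symTriples n, energy M a X (symOp a m ψ) t

/-- The pointwise norm ‖ψ‖_n². -/
def ptNormSq (a : ℝ) (n : ℕ) (ψ : V4 → ℝ) : V4 → ℝ :=
  fun x => ∑ m ∈ symTriples n, (symOp a m ψ x) ^ 2

/-- The pointwise norm ‖∇̸ψ‖_n². -/
def angNormSq (a : ℝ) (n : ℕ) (ψ : V4 → ℝ) : V4 → ℝ :=
  fun x => ∑ m ∈ symTriples n,
    ((pd 2 (symOp a m ψ) x) ^ 2 + (Real.sin (x 2) ^ 2)⁻¹ * (pd 3 (symOp a m ψ) x) ^ 2)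

def energyIntegrable (M a : ℝ) (X : V4 → Fin 4 → ℝ) (ψ : V4 → ℝ) (t : ℝ) : Prop :=
  IntegrableOn (fun p => momentum M a X ψ 0 (pt t p) * Real.sin p.2.1) (sliceSet M a)

def energyFiniteUpTo (M a : ℝ) (X : V4 → Fin 4 → ℝ) (n : ℕ) (ψ : V4 → ℝ) : Prop :=
  ∀ t : ℝ, ∀ m ∈ symTriples n, energyIntegrable M a X (symOp a m ψ) t

/-! Transformed (tortoise-coordinate) quantities. -/

/-- Tortoise coordinate: dr/dr_* = Δ/(r²+a²), r_*(3M) = 0. -/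
def rstar (M a r : ℝ) : ℝ := ∫ s in (3 * M)..r, (s ^ 2 + a ^ 2) / Δk M a s

/-- Ñ² where Ñ⁻² = 1 − a² sin²θ Δ/(r²+a²)². -/
def Ntilde2 (M a r θ : ℝ) : ℝ :=
  (1 - a ^ 2 * Real.sin θ ^ 2 * Δk M a r / (r ^ 2 + a ^ 2) ^ 2)⁻¹

def VQ (M a r : ℝ) : ℝ := Δk M a r / (r ^ 2 + a ^ 2) ^ 2

/-- The potential V of the transformed wave equation. -/
def Vpot (M a r : ℝ) : ℝ :=
  Δk M a r * (2 * M * r ^ 3 + r ^ 2 * a ^ 2 - 4 * M * r * a ^ 2 + a ^ 4) / (r ^ 2 + a ^ 2) ^ 4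

/-- Partial derivatives in the (t, r_*, θ, φ) coordinates, acting on functions
parameterized by BL coordinates; ∂_{r_*} = (Δ/(r²+a²)) ∂_r. -/
def tpd (M a : ℝ) (i : Fin 4) (u : V4 → ℝ) : V4 → ℝ :=
  fun x => if i = 1 then Δk M a (x 1) / (x 1 ^ 2 + a ^ 2) * pd 1 u x else pd i u x

/-- G̃^{αβ} = (ΣΔ/(r²+a²)²) g^{αβ} in (t, r_*, θ, φ) coordinates. -/
def Gtilde (M a r θ : ℝ) : Matrix (Fin 4) (Fin 4) ℝ :=
  !![-(PiK M a r θ) / (r ^ 2 + a ^ 2) ^ 2, 0, 0, -(2 * a * M * r) / (r ^ 2 + a ^ 2) ^ 2;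
     0, 1, 0, 0;
     0, 0, VQ M a r, 0;
     -(2 * a * M * r) / (r ^ 2 + a ^ 2) ^ 2, 0, 0,
       (Δk M a r - a ^ 2 * Real.sin θ ^ 2) / ((r ^ 2 + a ^ 2) ^ 2 * Real.sin θ ^ 2)]

/-- The transformed momentum P̃^α_{(X,q)}[ũ]. -/
def tmomentum (M a : ℝ) (X : V4 → Fin 4 → ℝ) (q : V4 → ℝ) (u : V4 → ℝ) (α : Fin 4) :
    V4 → ℝ :=
  fun x =>
    -(∑ γ, Gtilde M a (x 1) (x 2) α γ * tpd M a γ u x) * (∑ β, tpd M a β u x * X x β) +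
      (1 / 2) * X x α *
        ((∑ ρ, ∑ σ, Gtilde M a (x 1) (x 2) ρ σ * tpd M a ρ u x * tpd M a σ u x) +
          Vpot M a (x 1) * u x ^ 2) +
      ∑ β, Gtilde M a (x 1) (x 2) α β *
        (-(q x) * tpd M a β u x * u x + (1 / 2) * tpd M a β q x * u x ^ 2)

/-- The transformed energy Ẽ_{(X,q)}[ũ](t) = ∫ P̃^t sinθ dr_* dθ dφ (as an r-integral). -/
def tenergy (M a : ℝ) (X : V4 → Fin 4 → ℝ) (q : V4 → ℝ) (u : V4 → ℝ) (t : ℝ) : ℝ :=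
  ∫ p in sliceSet M a,
    tmomentum M a X q u 0 (pt t p) * Real.sin p.2.1 * ((p.1 ^ 2 + a ^ 2) / Δk M a p.1)

def zeroFn : V4 → ℝ := fun _ => 0

def tenergyUpTo (M a : ℝ) (X : V4 → Fin 4 → ℝ) (q : V4 → ℝ) (n : ℕ) (u : V4 → ℝ)
    (t : ℝ) : ℝ :=
  ∑ m ∈ symTriples n, tenergy M a X q (symOp a m u) t

def tenergyIntegrable (M a : ℝ) (X : V4 → Fin 4 → ℝ) (q : V4 → ℝ) (u : V4 → ℝ)
    (t : ℝ) : Prop :=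
  IntegrableOn
    (fun p => tmomentum M a X q u 0 (pt t p) * Real.sin p.2.1 * ((p.1 ^ 2 + a ^ 2) / Δk M a p.1))
    (sliceSet M a)

def tenergyFiniteUpTo (M a : ℝ) (X : V4 → Fin 4 → ℝ) (q : V4 → ℝ) (n : ℕ)
    (u : V4 → ℝ) : Prop :=
  ∀ t : ℝ, ∀ m ∈ symTriples n, tenergyIntegrable M a X q (symOp a m u) t

/-- The vector field K = (t² + r_*² + 1) T_χ + 2 t r_* Ñ² ∂_{r_*}, in tilde coordinates. -/
def Kvec (M a : ℝ) (χ : ℝ → ℝ) : V4 → Fin 4 → ℝ :=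
  fun x =>
    ![x 0 ^ 2 + rstar M a (x 1) ^ 2 + 1,
      2 * x 0 * rstar M a (x 1) * Ntilde2 M a (x 1) (x 2),
      0,
      (x 0 ^ 2 + rstar M a (x 1) ^ 2 + 1) * (χ (x 1) * ωH M a)]

def qK (M a : ℝ) : V4 → ℝ := fun x => x 0 * (Ntilde2 M a (x 1) (x 2) - 1)

/-- T_⊥ = ∂_t + (2aMr/Π) ∂_φ. -/
def Tperp (M a : ℝ) : V4 → Fin 4 → ℝ :=
  fun x => ![1, 0, 0, 2 * a * M * x 1 / PiK M a (x 1) (x 2)]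

/-- The future unit normal n = (Π/(ΣΔ))^{1/2} T_⊥ of the constant-t slices. -/
def normalVF (M a : ℝ) : V4 → Fin 4 → ℝ :=
  fun x i =>
    Real.sqrt (PiK M a (x 1) (x 2) / (SigK a (x 1) (x 2) * Δk M a (x 1))) * Tperp M a x i

/-- ũ = √(r² + a²) ψ. -/
def utilde (a : ℝ) (ψ : V4 → ℝ) : V4 → ℝ := fun x => Real.sqrt (x 1 ^ 2 + a ^ 2) * ψ x

/-- The transformed wave operator ∂_{r_*}² + (r²+a²)⁻² ℛ − V. -/
def tbox (M a : ℝ) (u : V4 → ℝ) : V4 → ℝ :=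
  fun x =>
    tpd M a 1 (tpd M a 1 u) x + ((x 1 ^ 2 + a ^ 2) ^ 2)⁻¹ * curlyR M a u x -
      Vpot M a (x 1) * u x

def IsTWaveSol (M a : ℝ) (u : V4 → ℝ) : Prop :=
  ContDiffOn ℝ (⊤ : ℕ∞) u (ext M a) ∧ ∀ x ∈ ext M a, tbox M a u x = 0

/-- The Kerr metric (lower indices) in BL coordinates. -/
def gBL (M a r θ : ℝ) : Matrix (Fin 4) (Fin 4) ℝ :=
  !![-(1 - 2 * M * r / SigK a r θ), 0, 0, -(2 * a * M * r * Real.sin θ ^ 2 / SigK a r θ);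
     0, SigK a r θ / Δk M a r, 0, 0;
     0, 0, SigK a r θ, 0;
     -(2 * a * M * r * Real.sin θ ^ 2 / SigK a r θ), 0, 0,
       PiK M a r θ * Real.sin θ ^ 2 / SigK a r θ]

/-- The Kerr metric (lower indices) in (t, r_*, θ, φ) coordinates. -/
def gTl (M a r θ : ℝ) : Matrix (Fin 4) (Fin 4) ℝ :=
  !![-(1 - 2 * M * r / SigK a r θ), 0, 0, -(2 * a * M * r * Real.sin θ ^ 2 / SigK a r θ);
     0, SigK a r θ * Δk M a r / (r ^ 2 + a ^ 2) ^ 2, 0, 0;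
     0, 0, SigK a r θ, 0;
     -(2 * a * M * r * Real.sin θ ^ 2 / SigK a r θ), 0, 0,
       PiK M a r θ * Real.sin θ ^ 2 / SigK a r θ]

def quadForm (g : Matrix (Fin 4) (Fin 4) ℝ) (X Y : Fin 4 → ℝ) : ℝ :=
  ∑ i, ∑ j, g i j * X i * Y j

/-! Null geodesics. -/

def gBLinv (M a r θ : ℝ) : Matrix (Fin 4) (Fin 4) ℝ := (SigK a r θ)⁻¹ • Ginv M a r θ

def vel (γ : ℝ → V4) (s : ℝ) (i : Fin 4) : ℝ := deriv (fun u => γ u i) s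

def christoffel (M a : ℝ) (x : V4) (k i j : Fin 4) : ℝ :=
  (1 / 2) * ∑ l, gBLinv M a (x 1) (x 2) k l *
    (pd i (fun y => gBL M a (y 1) (y 2) l j) x + pd j (fun y => gBL M a (y 1) (y 2) l i) x -
      pd l (fun y => gBL M a (y 1) (y 2) i j) x)

/-- r admits an orbiting null geodesic: there is a (nonconstant) null geodesic of the Kerr
metric remaining at that constant value of r in the exterior region. -/
def IsOrbitingNullGeodesicRadius (M a r : ℝ) : Prop :=
  ∃ γ : ℝ → V4,
    (∀ i, ContDiff ℝ (⊤ : ℕ∞) fun s => γ s i) ∧ (∀ s, γ s ∈ ext M a) ∧ (∀ s, γ s 1 = r) ∧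
      (∃ s i, vel γ s i ≠ 0) ∧
      (∀ s, quadForm (gBL M a (γ s 1) (γ s 2)) (vel γ s) (vel γ s) = 0) ∧
      ∀ s k, deriv (fun u => vel γ u k) s +
        ∑ i, ∑ j, christoffel M a (γ s) k i j * vel γ s i * vel γ s j = 0

/-! Morawetz (symmetry-indexed) quantities. -/

/-- Coefficients ℛ^a of ℛ in the basis 𝕊₂ = {∂_t², ∂_t∂_φ, ∂_φ², Q}. -/
def Rcoef (M a r : ℝ) : Fin 4 → ℝ :=
  ![-((r ^ 2 + a ^ 2) ^ 2), -(4 * a * M * r), Δk M a r - a ^ 2, Δk M a r]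

/-- Coefficients ℒ^a of ℒ = ∂_t² + ∂_φ² + Q in the basis 𝕊₂. -/
def Lcoef : Fin 4 → ℝ := ![1, 0, 1, 1]

/-- The second-order symmetry operators S_a ∈ 𝕊₂. -/
def symS (a : ℝ) (c : Fin 4) (ψ : V4 → ℝ) : V4 → ℝ :=
  if c = 0 then pd 0 (pd 0 ψ)
  else if c = 1 then pd 0 (pd 3 ψ)
  else if c = 2 then pd 3 (pd 3 ψ)
  else carterQ a ψ

/-- The coefficient matrices S_a^{αβ} with S_a = μ⁻¹ ∂_α (μ S_a^{αβ} ∂_β). -/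
def Smat (a : ℝ) (c : Fin 4) (θ : ℝ) : Matrix (Fin 4) (Fin 4) ℝ :=
  if c = 0 then !![1, 0, 0, 0; 0, 0, 0, 0; 0, 0, 0, 0; 0, 0, 0, 0]
  else if c = 1 then !![0, 0, 0, 1 / 2; 0, 0, 0, 0; 0, 0, 0, 0; 1 / 2, 0, 0, 0]
  else if c = 2 then !![0, 0, 0, 0; 0, 0, 0, 0; 0, 0, 0, 0; 0, 0, 0, 1]
  else
    !![a ^ 2 * Real.sin θ ^ 2, 0, 0, 0; 0, 0, 0, 0; 0, 0, 1, 0;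
       0, 0, 0, Real.cos θ ^ 2 / Real.sin θ ^ 2]

/-- ℒ^{αβ} = Σ_c ℒ^c S_c^{αβ}. -/
def Lmat (a : ℝ) (θ : ℝ) : Matrix (Fin 4) (Fin 4) ℝ :=
  fun α β => ∑ c, Lcoef c * Smat a c θ α β

/-- ℛ̃′^a = ∂_r (z₁ Δ⁻¹ ℛ^a). -/
def Rtp (M a : ℝ) (z₁ : ℝ → ℝ) (c : Fin 4) (r : ℝ) : ℝ :=
  deriv (fun s => z₁ s * (Δk M a s)⁻¹ * Rcoef M a s c) r

/-- ℛ̃̃″^a = ∂_r (z₂ z₁^{1/2} Δ^{−1/2} ℛ̃′^a). -/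
def Rtpp (M a : ℝ) (z₁ z₂ : ℝ → ℝ) (c : Fin 4) (r : ℝ) : ℝ :=
  deriv (fun s => z₂ s * Real.sqrt (z₁ s) * (Real.sqrt (Δk M a s))⁻¹ * Rtp M a z₁ c s) r

/-- 𝒜^a = z₁^{1/2} Δ^{3/2} (−ℛ̃̃″^a). -/
def Acoef (M a : ℝ) (z₁ z₂ : ℝ → ℝ) (c : Fin 4) (r : ℝ) : ℝ :=
  Real.sqrt (z₁ r) * (Δk M a r * Real.sqrt (Δk M a r)) * (-(Rtpp M a z₁ z₂ c r))

/-- 𝒰^{cd} = (1/2) z₂ ℛ̃′^c ℛ̃′^d. -/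
def Ucoef (M a : ℝ) (z₁ z₂ : ℝ → ℝ) (c d : Fin 4) (r : ℝ) : ℝ :=
  (1 / 2) * z₂ r * Rtp M a z₁ c r * Rtp M a z₁ d r

/-- 𝒱^a = (1/4) ∂_r (Δ ∂_r (z₁ ∂_r (z₂ ℛ̃′^a))). -/
def Vcoef (M a : ℝ) (z₁ z₂ : ℝ → ℝ) (c : Fin 4) (r : ℝ) : ℝ :=
  (1 / 4) *
    deriv (fun s =>
      Δk M a s * deriv (fun w => z₁ w * deriv (fun v => z₂ v * Rtp M a z₁ c v) w) s) r

/-- The r-component of the Morawetz vector field A^{ab} = z₁ z₂ ℛ̃′^{(a} ℒ^{b)} ∂_r. -/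
def AvecR (M a : ℝ) (z₁ z₂ : ℝ → ℝ) (i j : Fin 4) (r : ℝ) : ℝ :=
  z₁ r * z₂ r * ((1 / 2) * (Rtp M a z₁ i r * Lcoef j + Rtp M a z₁ j r * Lcoef i))

/-- The Morawetz scalars q_A^{ab}. -/
def qA (M a : ℝ) (z₁ z₂ : ℝ → ℝ) (i j : Fin 4) (r : ℝ) : ℝ :=
  (1 / 2) * deriv (AvecR M a z₁ z₂ i j) r -
    (1 / 2) * deriv z₁ r * z₂ r *
      ((1 / 2) * (Rtp M a z₁ i r * Lcoef j + Rtp M a z₁ j r * Lcoef i))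

/-- The symmetry-indexed Morawetz momentum P_A^α[ψ]. -/
def morMomentum (M a : ℝ) (z₁ z₂ : ℝ → ℝ) (ψ : V4 → ℝ) (α : Fin 4) : V4 → ℝ :=
  fun x => ∑ i, ∑ j,
    (-(∑ γ, Ginv M a (x 1) (x 2) α γ * pd γ (symS a i ψ) x) * pd 1 (symS a j ψ) x *
        AvecR M a z₁ z₂ i j (x 1) +
      (1 / 2) * (if α = 1 then AvecR M a z₁ z₂ i j (x 1) else 0) *
        (∑ ρ, ∑ σ, Ginv M a (x 1) (x 2) ρ σ * pd ρ (symS a i ψ) x * pd σ (symS a j ψ) x) +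
      ∑ β, Ginv M a (x 1) (x 2) α β *
        (-(qA M a z₁ z₂ i j (x 1)) * pd β (symS a i ψ) x * symS a j ψ x +
          (1 / 2) * pd β (fun y => qA M a z₁ z₂ i j (y 1)) x * symS a i ψ x * symS a j ψ x))

/-- The first boundary current P∂₁^α[ψ]. -/
def morBoundary1 (M a : ℝ) (z₁ z₂ : ℝ → ℝ) (ψ : V4 → ℝ) (α : Fin 4) : V4 → ℝ :=
  fun x => ∑ i, ∑ j, ∑ β,
    (Ucoef M a z₁ z₂ i j (x 1) * Lmat a (x 2) α β -
        ∑ c, (1 / 2) *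
          (Ucoef M a z₁ z₂ c i (x 1) * Lcoef j + Ucoef M a z₁ z₂ c j (x 1) * Lcoef i) *
          Smat a c (x 2) α β) *
      symS a i ψ x * pd β (symS a j ψ) x

/-! Surface energies. -/

def pdR (f : ℝ × ℝ × ℝ → ℝ) (p : ℝ × ℝ × ℝ) : ℝ := deriv (fun s => f (s, p.2)) p.1

def pdTh (f : ℝ × ℝ × ℝ → ℝ) (p : ℝ × ℝ × ℝ) : ℝ :=
  deriv (fun s => f (p.1, s, p.2.2)) p.2.1

def pdPh (f : ℝ × ℝ × ℝ → ℝ) (p : ℝ × ℝ × ℝ) : ℝ :=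
  deriv (fun s => f (p.1, p.2.1, s)) p.2.2

/-- Flux of the transformed momentum through the graph t = f(r_*, θ, φ)
(f given as a function of (r, θ, φ), with ∂_{r_*} f = (Δ/(r²+a²)) ∂_r f). -/
def tsurfEnergy (M a : ℝ) (X : V4 → Fin 4 → ℝ) (q : V4 → ℝ) (u : V4 → ℝ)
    (f : ℝ × ℝ × ℝ → ℝ) : ℝ :=
  ∫ p in sliceSet M a,
    (tmomentum M a X q u 0 (pt (f p) p) -
        Δk M a p.1 / (p.1 ^ 2 + a ^ 2) * pdR f p * tmomentum M a X q u 1 (pt (f p) p) -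
        pdTh f p * tmomentum M a X q u 2 (pt (f p) p) -
        pdPh f p * tmomentum M a X q u 3 (pt (f p) p)) *
      Real.sin p.2.1 * ((p.1 ^ 2 + a ^ 2) / Δk M a p.1)

def tsurfEnergyIntegrable (M a : ℝ) (X : V4 → Fin 4 → ℝ) (q : V4 → ℝ) (u : V4 → ℝ)
    (f : ℝ × ℝ × ℝ → ℝ) : Prop :=
  IntegrableOn
    (fun p =>
      (tmomentum M a X q u 0 (pt (f p) p) -
          Δk M a p.1 / (p.1 ^ 2 + a ^ 2) * pdR f p * tmomentum M a X q u 1 (pt (f p) p) -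
          pdTh f p * tmomentum M a X q u 2 (pt (f p) p) -
          pdPh f p * tmomentum M a X q u 3 (pt (f p) p)) *
        Real.sin p.2.1 * ((p.1 ^ 2 + a ^ 2) / Δk M a p.1))
    (sliceSet M a)


private lemma hasDerivAt_update (x : V4) (i : Fin 4) (s₀ : ℝ) :
    HasDerivAt (fun s => Function.update x i s) (Pi.single i 1) s₀ := by
  rw [hasDerivAt_pi]
  intro j
  rcases eq_or_ne j i with rfl | h
  · simpa using hasDerivAt_id' s₀
  · simpa [Function.update_of_ne h, Pi.single_eq_of_ne h] using hasDerivAt_const s₀ (x j)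

private lemma pd_eq_fderiv {f : V4 → ℝ} {x : V4} {i : Fin 4} (hf : DifferentiableAt ℝ f x) :
    pd i f x = fderiv ℝ f x (Pi.single i 1) := by
  have hl : HasFDerivAt f (fderiv ℝ f x) (Function.update x i (x i)) := by
    rw [Function.update_eq_self]; exact hf.hasFDerivAt
  exact (hl.comp_hasDerivAt (x i) (hasDerivAt_update x i (x i))).deriv

private lemma pdAux {f : V4 → ℝ} {x : V4} {i : Fin 4} (hf : DifferentiableAt ℝ f x) :
    HasDerivAt (fun s => f (Function.update x i s)) (pd i f x) (x i) := by
  rw [pd_eq_fderiv hf]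
  have hl : HasFDerivAt f (fderiv ℝ f x) (Function.update x i (x i)) := by
    rw [Function.update_eq_self]; exact hf.hasFDerivAt
  exact hl.comp_hasDerivAt (x i) (hasDerivAt_update x i (x i))

private lemma pd_congr {U : Set V4} (hU : IsOpen U) {x : V4} (hx : x ∈ U)
    {f g : V4 → ℝ} (h : ∀ y ∈ U, f y = g y) (i : Fin 4) : pd i f x = pd i g x := by
  have hc : ContinuousAt (fun s => Function.update x i s) (x i) :=
    (hasDerivAt_update x i (x i)).continuousAt
  have hx' : Function.update x i (x i) ∈ U := by rw [Function.update_eq_self]; exact hx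
  have hmem : ∀ᶠ s in 𝓝 (x i), Function.update x i s ∈ U :=
    hc.eventually_mem (hU.mem_nhds hx')
  exact Filter.EventuallyEq.deriv_eq (by filter_upwards [hmem] with s hs using h _ hs)

private lemma leTop1 : (1 : WithTop ℕ∞) ≤ ((⊤:ℕ∞) : WithTop ℕ∞) := by exact_mod_cast le_top
private lemma leTop2 : ((⊤:ℕ∞) : WithTop ℕ∞) + 1 ≤ ((⊤:ℕ∞) : WithTop ℕ∞) := by exact_mod_cast le_top

private lemma contDiffOn_pd {U : Set V4} (hU : IsOpen U) {f : V4 → ℝ}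
    (hf : ContDiffOn ℝ (⊤ : ℕ∞) f U) (i : Fin 4) : ContDiffOn ℝ (⊤ : ℕ∞) (pd i f) U := by
  have h1 : ContDiffOn ℝ (⊤ : ℕ∞) (fun y => fderiv ℝ f y (Pi.single i 1)) U :=
    (hf.fderiv_of_isOpen hU leTop2).clm_apply contDiffOn_const
  exact h1.congr fun y hy =>
    pd_eq_fderiv ((hf.differentiableOn (by simp)).differentiableAt (hU.mem_nhds hy))

private lemma pd_comm {U : Set V4} (hU : IsOpen U) {f : V4 → ℝ}
    (hf : ContDiffOn ℝ (⊤ : ℕ∞) f U) {x : V4} (hx : x ∈ U) (i j : Fin 4) :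
    pd i (pd j f) x = pd j (pd i f) x := by
  have hdf : ∀ y ∈ U, DifferentiableAt ℝ f y := fun y hy =>
    (hf.differentiableOn (by simp)).differentiableAt (hU.mem_nhds hy)
  have hf' : ContDiffOn ℝ (⊤ : ℕ∞) (fderiv ℝ f) U := hf.fderiv_of_isOpen hU leTop2
  have hdf' : DifferentiableAt ℝ (fderiv ℝ f) x :=
    (hf'.differentiableOn (by simp)).differentiableAt (hU.mem_nhds hx)
  have hev : ∀ᶠ y in 𝓝 x, HasFDerivAt f (fderiv ℝ f y) y := by
    filter_upwards [hU.mem_nhds hx] with y hy using (hdf y hy).hasFDerivAt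
  have hsymm : ∀ v w, fderiv ℝ (fderiv ℝ f) x v w = fderiv ℝ (fderiv ℝ f) x w v :=
    fun v w => second_derivative_symmetric_of_eventually hev hdf'.hasFDerivAt v w
  have key : ∀ a b : Fin 4,
      pd a (pd b f) x = fderiv ℝ (fderiv ℝ f) x (Pi.single a 1) (Pi.single b 1) := by
    intro a b
    have h1 : pd a (pd b f) x = pd a (fun y => fderiv ℝ f y (Pi.single b 1)) x :=
      pd_congr hU hx (fun y hy => pd_eq_fderiv (hdf y hy)) a
    rw [h1, pd_eq_fderiv (hdf'.clm_apply (differentiableAt_const _)),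
      fderiv_clm_apply hdf' (differentiableAt_const _)]
    simp
  rw [key i j, key j i, hsymm]


/-- The canonical momentum P^α_{(X,q)}[ψ] for the Lagrangian
L̄ = (1/2)(Ḡ^{αβ}(∂_αψ)(∂_βψ) + V̄ψ²) with weight μ̄. -/
def canonMomentum (Vb : V4 → ℝ) (Gb : V4 → Matrix (Fin 4) (Fin 4) ℝ)
    (X : V4 → Fin 4 → ℝ) (q ψ : V4 → ℝ) (α : Fin 4) : V4 → ℝ :=
  fun y =>
    (∑ β, (-(∑ γ, Gb y α γ * pd γ ψ y) * pd β ψ y +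
        (1 / 2) * (if α = β then 1 else 0) *
          ((∑ ρ, ∑ σ, Gb y ρ σ * pd ρ ψ y * pd σ ψ y) + Vb y * ψ y ^ 2)) * X y β) +
      ∑ β, Gb y α β * (-(q y) * pd β ψ y * ψ y + (1 / 2) * pd β q y * ψ y ^ 2)

set_option maxHeartbeats 3200000 in
/-- **Lemma 2.1 (Divergence of generalized momenta).** -/
theorem divergence_of_generalized_momentum (U : Set V4) (hU : IsOpen U)
    (μb Vb q : V4 → ℝ) (Gb : V4 → Matrix (Fin 4) (Fin 4) ℝ) (X : V4 → Fin 4 → ℝ)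
    (ψ : V4 → ℝ)
    (hμ : ContDiffOn ℝ (⊤ : ℕ∞) μb U) (hμpos : ∀ x ∈ U, 0 < μb x)
    (hV : ContDiffOn ℝ (⊤ : ℕ∞) Vb U)
    (hG : ∀ i j, ContDiffOn ℝ (⊤ : ℕ∞) (fun x => Gb x i j) U)
    (hGsymm : ∀ x ∈ U, ∀ i j, Gb x i j = Gb x j i)
    (hX : ∀ i, ContDiffOn ℝ (⊤ : ℕ∞) (fun x => X x i) U)
    (hq : ContDiffOn ℝ (⊤ : ℕ∞) q U) (hψ : ContDiffOn ℝ (⊤ : ℕ∞) ψ U)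
    (hsol : ∀ x ∈ U,
      (μb x)⁻¹ * (∑ α, pd α (fun y => μb y * ∑ β, Gb y α β * pd β ψ y) x) -
        Vb x * ψ x = 0) :
    ∀ x ∈ U,
      (μb x)⁻¹ * (∑ α, pd α (fun y => μb y * canonMomentum Vb Gb X q ψ α y) x) =
        (∑ α, ∑ β,
            (-(∑ γ, Gb x α γ * pd γ (fun y => X y β) x) +
              (1 / 2) * (∑ γ, pd γ (fun y => X y γ) x) * Gb x α β +
              (1 / 2) * (μb x)⁻¹ * ∑ γ, X x γ * pd γ (fun y => μb y * Gb y α β) x) *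
            pd α ψ x * pd β ψ x) +
          ((1 / 2) * (∑ γ, pd γ (fun y => X y γ) x) * Vb x +
            (1 / 2) * (μb x)⁻¹ * ∑ γ, X x γ * pd γ (fun y => μb y * Vb y) x) * ψ x ^ 2 -
          q x * ((∑ α, ∑ β, Gb x α β * pd α ψ x * pd β ψ x) + Vb x * ψ x ^ 2) +
          (1 / 2) * (μb x)⁻¹ *
            (∑ α, pd α (fun y => μb y * ∑ β, Gb y α β * pd β q y) x) * ψ x ^ 2 := by
  intro x hx
  have hm : μb x ≠ 0 := ne_of_gt (hμpos x hx)
  have dd : ∀ {f : V4 → ℝ}, ContDiffOn ℝ (⊤ : ℕ∞) f U → DifferentiableAt ℝ f x :=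
    fun hf => (hf.differentiableOn (by simp)).differentiableAt (hU.mem_nhds hx)
  have cψd : ∀ i : Fin 4, ContDiffOn ℝ (⊤ : ℕ∞) (pd i ψ) U := fun i => contDiffOn_pd hU hψ i
  have cqd : ∀ i : Fin 4, ContDiffOn ℝ (⊤ : ℕ∞) (pd i q) U := fun i => contDiffOn_pd hU hq i
  have dψ : DifferentiableAt ℝ ψ x := dd hψ
  have dq : DifferentiableAt ℝ q x := dd hq
  have dψd : ∀ i : Fin 4, DifferentiableAt ℝ (pd i ψ) x := fun i => dd (cψd i)
  have dX : ∀ i : Fin 4, DifferentiableAt ℝ (fun y => X y i) x := fun i => dd (hX i)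
  have dμG : ∀ ρ σ : Fin 4, DifferentiableAt ℝ (fun y => μb y * Gb y ρ σ) x :=
    fun ρ σ => dd (hμ.mul (hG ρ σ))
  have dμV : DifferentiableAt ℝ (fun y => μb y * Vb y) x := dd (hμ.mul hV)
  have dFψ : ∀ α : Fin 4, DifferentiableAt ℝ (fun y => μb y * ∑ β, Gb y α β * pd β ψ y) x :=
    fun α => dd (hμ.mul (ContDiffOn.sum fun β _ => (hG α β).mul (cψd β)))
  have dFq : ∀ α : Fin 4, DifferentiableAt ℝ (fun y => μb y * ∑ β, Gb y α β * pd β q y) x :=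
    fun α => dd (hμ.mul (ContDiffOn.sum fun β _ => (hG α β).mul (cqd β)))
  have hA : ∀ α : Fin 4, (fun y => μb y * canonMomentum Vb Gb X q ψ α y) = (fun y =>
      -((μb y * ∑ β, Gb y α β * pd β ψ y) * ∑ β, pd β ψ y * X y β) +
      1 / 2 * (X y α *
          ((∑ ρ, ∑ σ, (μb y * Gb y ρ σ) * (pd ρ ψ y * pd σ ψ y)) + (μb y * Vb y) * (ψ y * ψ y))) +
      -(q y * ψ y * (μb y * ∑ β, Gb y α β * pd β ψ y)) +
      1 / 2 * (ψ y * ψ y * (μb y * ∑ β, Gb y α β * pd β q y))) := by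
    intro α
    funext y
    fin_cases α <;>
      · simp [canonMomentum, Fin.sum_univ_four]
        ring
  have hB : ∀ α : Fin 4, pd α (fun y =>
      -((μb y * ∑ β, Gb y α β * pd β ψ y) * ∑ β, pd β ψ y * X y β) +
      1 / 2 * (X y α *
          ((∑ ρ, ∑ σ, (μb y * Gb y ρ σ) * (pd ρ ψ y * pd σ ψ y)) + (μb y * Vb y) * (ψ y * ψ y))) +
      -(q y * ψ y * (μb y * ∑ β, Gb y α β * pd β ψ y)) +
      1 / 2 * (ψ y * ψ y * (μb y * ∑ β, Gb y α β * pd β q y))) x =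
      -(pd α (fun y => μb y * ∑ β, Gb y α β * pd β ψ y) x * ∑ β, pd β ψ x * X x β +
        (μb x * ∑ β, Gb x α β * pd β ψ x) *
          ∑ β, (pd α (pd β ψ) x * X x β + pd β ψ x * pd α (fun y => X y β) x)) +
      1 / 2 * (pd α (fun y => X y α) x *
            ((∑ ρ, ∑ σ, (μb x * Gb x ρ σ) * (pd ρ ψ x * pd σ ψ x)) + (μb x * Vb x) * (ψ x * ψ x)) +
          X x α *
            ((∑ ρ, ∑ σ, (pd α (fun y => μb y * Gb y ρ σ) x * (pd ρ ψ x * pd σ ψ x) +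
                (μb x * Gb x ρ σ) * (pd α (pd ρ ψ) x * pd σ ψ x + pd ρ ψ x * pd α (pd σ ψ) x))) +
              (pd α (fun y => μb y * Vb y) x * (ψ x * ψ x) +
                (μb x * Vb x) * (pd α ψ x * ψ x + ψ x * pd α ψ x)))) +
      -((pd α q x * ψ x + q x * pd α ψ x) * (μb x * ∑ β, Gb x α β * pd β ψ x) +
          q x * ψ x * pd α (fun y => μb y * ∑ β, Gb y α β * pd β ψ y) x) +
      1 / 2 * ((pd α ψ x * ψ x + ψ x * pd α ψ x) * (μb x * ∑ β, Gb x α β * pd β q x) +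
          ψ x * ψ x * pd α (fun y => μb y * ∑ β, Gb y α β * pd β q y) x) := by
    intro α
    have pdA : ∀ {f : V4 → ℝ}, DifferentiableAt ℝ f x →
        HasDerivAt (fun s => f (Function.update x α s)) (pd α f x) (x α) := fun hf => pdAux hf
    have H :=
      ((((pdA (dFψ α)).mul (HasDerivAt.sum (u := Finset.univ) fun β _ => (pdA (dψd β)).mul (pdA (dX β)))).neg).add
        (HasDerivAt.const_mul (1 / 2 : ℝ) ((pdA (dX α)).mul
          ((HasDerivAt.sum (u := Finset.univ) fun ρ _ => HasDerivAt.sum (u := Finset.univ) fun σ _ =>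
              (pdA (dμG ρ σ)).mul ((pdA (dψd ρ)).mul (pdA (dψd σ)))).add
            ((pdA dμV).mul ((pdA dψ).mul (pdA dψ))))))).add
        ((((pdA dq).mul (pdA dψ)).mul (pdA (dFψ α))).neg) |>.add
        (HasDerivAt.const_mul (1 / 2 : ℝ) (((pdA dψ).mul (pdA dψ)).mul (pdA (dFq α))))
    have h2 := H.deriv
    simp only [Function.update_eq_self, Pi.mul_apply, Pi.add_apply, Pi.neg_apply, Finset.sum_apply] at h2
    exact h2
  have hS : (∑ α, pd α (fun y => μb y * canonMomentum Vb Gb X q ψ α y) x) =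
      ∑ α : Fin 4,
      (-(pd α (fun y => μb y * ∑ β, Gb y α β * pd β ψ y) x * ∑ β, pd β ψ x * X x β +
        (μb x * ∑ β, Gb x α β * pd β ψ x) *
          ∑ β, (pd α (pd β ψ) x * X x β + pd β ψ x * pd α (fun y => X y β) x)) +
      1 / 2 * (pd α (fun y => X y α) x *
            ((∑ ρ, ∑ σ, (μb x * Gb x ρ σ) * (pd ρ ψ x * pd σ ψ x)) + (μb x * Vb x) * (ψ x * ψ x)) +
          X x α *
            ((∑ ρ, ∑ σ, (pd α (fun y => μb y * Gb y ρ σ) x * (pd ρ ψ x * pd σ ψ x) +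
                (μb x * Gb x ρ σ) * (pd α (pd ρ ψ) x * pd σ ψ x + pd ρ ψ x * pd α (pd σ ψ) x))) +
              (pd α (fun y => μb y * Vb y) x * (ψ x * ψ x) +
                (μb x * Vb x) * (pd α ψ x * ψ x + ψ x * pd α ψ x)))) +
      -((pd α q x * ψ x + q x * pd α ψ x) * (μb x * ∑ β, Gb x α β * pd β ψ x) +
          q x * ψ x * pd α (fun y => μb y * ∑ β, Gb y α β * pd β ψ y) x) +
      1 / 2 * ((pd α ψ x * ψ x + ψ x * pd α ψ x) * (μb x * ∑ β, Gb x α β * pd β q x) +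
          ψ x * ψ x * pd α (fun y => μb y * ∑ β, Gb y α β * pd β q y) x)) := by
    refine Finset.sum_congr rfl fun α _ => ?_
    rw [hA α]
    exact hB α
  have hsolE : (∑ α, pd α (fun y => μb y * ∑ β, Gb y α β * pd β ψ y) x) =
      μb x * (Vb x * ψ x) := by
    have h1 : (μb x)⁻¹ * (∑ α, pd α (fun y => μb y * ∑ β, Gb y α β * pd β ψ y) x) =
        Vb x * ψ x := by linarith [hsol x hx]
    rw [inv_mul_eq_iff_eq_mul₀ hm] at h1
    exact h1
  simp only [Fin.sum_univ_four] at hsolE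
  have hp3 : pd 3 (fun y => μb y * (Gb y 3 0 * pd 0 ψ y + Gb y 3 1 * pd 1 ψ y + Gb y 3 2 * pd 2 ψ y + Gb y 3 3 * pd 3 ψ y)) x = μb x * (Vb x * ψ x) - pd 0 (fun y => μb y * (Gb y 0 0 * pd 0 ψ y + Gb y 0 1 * pd 1 ψ y + Gb y 0 2 * pd 2 ψ y + Gb y 0 3 * pd 3 ψ y)) x - pd 1 (fun y => μb y * (Gb y 1 0 * pd 0 ψ y + Gb y 1 1 * pd 1 ψ y + Gb y 1 2 * pd 2 ψ y + Gb y 1 3 * pd 3 ψ y)) x - pd 2 (fun y => μb y * (Gb y 2 0 * pd 0 ψ y + Gb y 2 1 * pd 1 ψ y + Gb y 2 2 * pd 2 ψ y + Gb y 2 3 * pd 3 ψ y)) x := by linarith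
  rw [hS, inv_mul_eq_iff_eq_mul₀ hm]
  simp only [Fin.sum_univ_four]
  rw [hGsymm x hx 1 0, hGsymm x hx 2 0, hGsymm x hx 3 0, hGsymm x hx 2 1,
    hGsymm x hx 3 1, hGsymm x hx 3 2]
  rw [pd_comm hU hψ hx 1 0, pd_comm hU hψ hx 2 0, pd_comm hU hψ hx 3 0,
    pd_comm hU hψ hx 2 1, pd_comm hU hψ hx 3 1, pd_comm hU hψ hx 3 2]
  rw [hp3]
  field_simp
  ring

end KerrPaper
end
end

section
/- Weighted Hardy estimate (Lemma 3.7): For each M > 0 there exist positive constants ā and ε, depending only on M, such that if |a| < ā, then for every function φ : [r₊,∞) → ℝ that is bounded and smooth (smooth on the interior with all derivatives extending continuously to r₊) and for which the right-hand integral is finite, one has ∫_{r₊}^{∞} [Δ²/(r²(r²+a²))·φ′(r)² + (1/6)·((9r² − 46Mr + 54M²)/r⁴)·φ(r)²] dr ≥ ε·∫_{r₊}^{∞} [Δ²/(r²(r²+a²))·φ′(r)² + r⁻²·φ(r)²] dr. -/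
noncomputable section

open MeasureTheory Filter Topology

namespace KerrPaper

/-! ### Auxiliary material for Lemma 3.7 -/

/-- The multiplier polynomial used in the Hardy estimate. -/
def WHp (M r : ℝ) : ℝ := 4/5*r - 59/50*M

/-- The Hardy multiplier function `f`. -/
def WHf (M a r : ℝ) : ℝ := WHp M r * Δk M a r / r^4

/-- Explicit formula for the derivative of `WHf`. -/
def WHf' (M a r : ℝ) : ℝ :=
  ((4/5 * Δk M a r + WHp M r * (2*r - 2*M)) * r^4 - WHp M r * Δk M a r * (4*r^3)) / (r^4)^2

lemma WHf_hasDerivAt (M a r : ℝ) (hr : r ≠ 0) :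
    HasDerivAt (fun s => WHf M a s) (WHf' M a r) r := by
  have hp : HasDerivAt (fun s : ℝ => WHp M s) (4/5) r := by
    simp only [WHp]
    simpa using ((hasDerivAt_id r).const_mul ((4:ℝ)/5)).sub_const (59/50*M)
  have hΔ : HasDerivAt (fun s : ℝ => Δk M a s) (2*r - 2*M) r := by
    simp only [Δk]
    have h := ((hasDerivAt_pow 2 r).sub ((hasDerivAt_id r).const_mul (2*M))).add_const (a^2)
    refine h.congr_deriv ?_
    push_cast
    ring
  have hd := hasDerivAt_pow 4 r
  have h := (hp.mul hΔ).div hd (pow_ne_zero 4 hr)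
  have heq : (fun s => WHf M a s) = fun s => WHp M s * Δk M a s / s^4 := by
    funext s; simp [WHf]
  have heq2 : WHf' M a r = ((4/5 * Δk M a r + WHp M r * (2*r - 2*M)) * r^4
      - WHp M r * Δk M a r * ((4:ℕ) * r^(4-1))) / (r^4)^2 := by
    simp only [WHf']
    push_cast
    ring
  rw [heq, heq2]
  exact h

lemma WHkey (M a r : ℝ) (hM : 0 < M) (ha : a^2 ≤ M^2/100) (hr : 19*M/10 ≤ r) :
    0 ≤ 431*r^4 - 1976*M*r^3 + 5084*M^2*r^2 - 30160*a^2*r^2 + 65608*a^2*M*r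
        - 13924*a^2*M^2 := by
  have hr0 : 0 < r := by nlinarith
  have h1 : 361*M^2/100 ≤ r^2 := by nlinarith
  have h2 : a^2*r^2 ≤ M^2/100*r^2 :=
    mul_le_mul_of_nonneg_right ha (sq_nonneg r)
  have h3 : a^2*M^2 ≤ M^2/100*M^2 :=
    mul_le_mul_of_nonneg_right ha (sq_nonneg M)
  have h4 : 0 ≤ a^2*(M*r) := mul_nonneg (sq_nonneg a) (mul_pos hM hr0).le
  have h6 : M^2*M^2 ≤ 100/361*(M^2*r^2) := by nlinarith [sq_nonneg M]
  nlinarith [mul_nonneg (sq_nonneg (431*r - 988*M)) (sq_nonneg r), h2, h3, h4, h6,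
    mul_pos (mul_pos hM hM) (mul_pos hr0 hr0)]

lemma WHf'_bound (M a r : ℝ) (hM : 0 < M) (ha : a^2 ≤ M^2/100) (hr : 19*M/10 ≤ r) :
    |WHf' M a r| ≤ 2*(r^2)⁻¹ := by
  have hr0 : 0 < r := by nlinarith
  have hMr : M ≤ 10*r/19 := by linarith
  have h8 : (0:ℝ) < (r^4)^2 := by positivity
  have hnum : |(4/5 * Δk M a r + WHp M r * (2*r - 2*M)) * r^4
      - WHp M r * Δk M a r * (4*r^3)| ≤ 2*r^6 := by
    rw [abs_le]
    have ha0 : 0 ≤ a^2 := sq_nonneg a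
    constructor
    · simp only [Δk, WHp]
      nlinarith [mul_pos hM hr0, mul_pos hr0 hr0, sq_nonneg (r - M), sq_nonneg (r - 2*M),
        mul_le_mul_of_nonneg_right ha (mul_pos hr0 hr0).le,
        mul_le_mul_of_nonneg_right hMr (mul_pos (mul_pos hr0 hr0) (mul_pos hr0 hr0)).le,
        mul_le_mul_of_nonneg_right ha (mul_pos hM hr0).le,
        mul_nonneg (mul_nonneg ha0 hM.le) hr0.le, mul_nonneg ha0 (mul_pos hr0 hr0).le]
    · simp only [Δk, WHp]
      have hbM : a^2*r^3*M ≤ a^2*r^3*(10*r/19) :=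
        mul_le_mul_of_nonneg_left hMr (by positivity)
      have hbr : a^2*r^4 ≤ M^2/100*r^4 :=
        mul_le_mul_of_nonneg_right ha (by positivity)
      nlinarith [sq_nonneg (140*r^3 - 139*M*r^2), hbM, hbr,
        mul_nonneg (mul_nonneg (sq_nonneg M) (sq_nonneg r)) (sq_nonneg r),
        mul_pos hr0 hr0]
  have hcalc : |WHf' M a r| = |(4/5 * Δk M a r + WHp M r * (2*r - 2*M)) * r^4
      - WHp M r * Δk M a r * (4*r^3)| / (r^4)^2 := by
    rw [WHf', abs_div, abs_of_pos h8]
  rw [hcalc]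
  have h2 : |(4/5 * Δk M a r + WHp M r * (2*r - 2*M)) * r^4
      - WHp M r * Δk M a r * (4*r^3)| / (r^4)^2 ≤ 2*r^6/(r^4)^2 := by
    gcongr
  refine h2.trans (le_of_eq ?_)
  field_simp

lemma WHf_sq_bound (M a r : ℝ) (hM : 0 < M) (ha : a^2 ≤ M^2/100) (hr : 19*M/10 ≤ r) :
    WHf M a r^2 ≤ (r^2)⁻¹ * (Δk M a r^2/(r^2*(r^2+a^2))) := by
  have hr0 : 0 < r := by nlinarith
  have hkey : WHp M r^2 * (r^2+a^2) ≤ r^4 := by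
    simp only [WHp]
    have hMr : M ≤ 10*r/19 := by linarith
    have h1 : 361*M^2/100 ≤ r^2 := by nlinarith
    have h2 : a^2*r^2 ≤ M^2/100*r^2 :=
      mul_le_mul_of_nonneg_right ha (sq_nonneg r)
    have h3 : a^2*M^2 ≤ M^2/100*M^2 :=
      mul_le_mul_of_nonneg_right ha (sq_nonneg M)
    have h4 : 0 ≤ a^2*(M*r) := mul_nonneg (sq_nonneg a) (mul_pos hM hr0).le
    have h6 : M^2*M^2 ≤ 100/361*(M^2*r^2) := by nlinarith [sq_nonneg M]
    have h7 : M*(M*r^2) ≤ 10*r/19*(M*r^2) :=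
      mul_le_mul_of_nonneg_right hMr (by positivity)
    nlinarith [h1, h2, h3, h4, h6, h7, mul_pos hr0 hr0,
      mul_pos (mul_pos hr0 hr0) (mul_pos hr0 hr0)]
  have hid : (r^2)⁻¹ * (Δk M a r^2/(r^2*(r^2+a^2))) - WHf M a r^2
      = (r^4 - WHp M r^2*(r^2+a^2)) * Δk M a r^2 / (r^8*(r^2+a^2)) := by
    have hra : (0:ℝ) < r^2 + a^2 := by positivity
    simp only [WHf]
    field_simp
  rw [← sub_nonneg, hid]
  apply div_nonneg (mul_nonneg (by linarith) (sq_nonneg _)) (by positivity)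

lemma WH_ident (M a r : ℝ) (hr : r ≠ 0) :
    (1/6*((9*r^2-46*M*r+54*M^2)/r^4) - 1/100*(r^2)⁻¹ + WHf' M a r)
        * (Δk M a r^2/(r^2*(r^2+a^2))) - 100/99*WHf M a r^2
      = (431*r^4 - 1976*M*r^3 + 5084*M^2*r^2 - 30160*a^2*r^2 + 65608*a^2*M*r
          - 13924*a^2*M^2) * Δk M a r^2 / (9900*r^8*(r^2+a^2)) := by
  have hra : (0:ℝ) < r^2 + a^2 := by positivity
  simp only [WHf, WHf', WHp, Δk]
  field_simp
  ring


lemma WHabs (D c F F' X Y : ℝ) (hD : 0 < D) (hc : 0 < c) (hF' : |F'| ≤ 2*c)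
    (hFsq : F^2 ≤ c*D) : |F' * Y^2 + F * (2*Y*X)| ≤ 3 * (D*X^2 + c*Y^2) := by
  obtain ⟨h1, h2⟩ := abs_le.mp hF'
  rw [abs_le]
  constructor
  · nlinarith [sq_nonneg (D*X + F*Y), mul_le_mul_of_nonneg_right hFsq (sq_nonneg Y),
      mul_le_mul_of_nonneg_right h1 (sq_nonneg Y), mul_nonneg hD.le (sq_nonneg X),
      mul_nonneg hc.le (sq_nonneg Y), hD, hc]
  · nlinarith [sq_nonneg (D*X - F*Y), mul_le_mul_of_nonneg_right hFsq (sq_nonneg Y),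
      mul_le_mul_of_nonneg_right h2 (sq_nonneg Y), mul_nonneg hD.le (sq_nonneg X),
      mul_nonneg hc.le (sq_nonneg Y), hD, hc]

lemma WHN (D c g F F' X Y : ℝ) (hD : 0 < D)
    (hW : 100/99*F^2 ≤ (g - 1/100*c + F')*D) :
    0 ≤ (D*X^2 + g*Y^2) - 1/100*(D*X^2 + c*Y^2) + (F'*Y^2 + F*(2*Y*X)) := by
  nlinarith [sq_nonneg (99/100*D*X + F*Y), hD,
    mul_le_mul_of_nonneg_right hW (sq_nonneg Y)]

set_option maxHeartbeats 1000000 in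
/-- **Lemma 3.7 (Weighted Hardy estimate).** -/
theorem weighted_hardy (M : ℝ) (hM : 0 < M) :
    ∃ abar ε : ℝ, 0 < abar ∧ abar ≤ M ∧ 0 < ε ∧
      ∀ a : ℝ, |a| < abar →
        ∀ φ : ℝ → ℝ, ContDiffOn ℝ (⊤ : ℕ∞) φ (Set.Ici (rplus M a)) →
          (∃ B : ℝ, ∀ r ∈ Set.Ici (rplus M a), |φ r| ≤ B) →
          MeasureTheory.IntegrableOn
            (fun r => Δk M a r ^ 2 / (r ^ 2 * (r ^ 2 + a ^ 2)) * deriv φ r ^ 2 +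
              (r ^ 2)⁻¹ * φ r ^ 2)
            (Set.Ioi (rplus M a)) →
            ε * ∫ r in Set.Ioi (rplus M a),
                (Δk M a r ^ 2 / (r ^ 2 * (r ^ 2 + a ^ 2)) * deriv φ r ^ 2 +
                  (r ^ 2)⁻¹ * φ r ^ 2) ≤
              ∫ r in Set.Ioi (rplus M a),
                (Δk M a r ^ 2 / (r ^ 2 * (r ^ 2 + a ^ 2)) * deriv φ r ^ 2 +
                  1 / 6 * ((9 * r ^ 2 - 46 * M * r + 54 * M ^ 2) / r ^ 4) * φ r ^ 2) := by
  refine ⟨M/10, 1/100, by positivity, by linarith, by norm_num, ?_⟩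
  intro a haa φ hφ hBex hint
  obtain ⟨B, hB⟩ := hBex
  have ha2 : a^2 ≤ M^2/100 := by
    have h1 : |a| < M/10 := haa
    nlinarith [abs_nonneg a, sq_abs a]
  have hMa2 : (0:ℝ) ≤ M^2 - a^2 := by nlinarith
  have hsq : Real.sqrt (M^2 - a^2) ^ 2 = M^2 - a^2 := Real.sq_sqrt hMa2
  have hsnn : 0 ≤ Real.sqrt (M^2 - a^2) := Real.sqrt_nonneg _
  have hr19 : 19*M/10 ≤ rplus M a := by
    have h9 : 9*M/10 ≤ Real.sqrt (M^2 - a^2) := by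
      have h0 : 9*M/10 = Real.sqrt ((9*M/10)^2) := (Real.sqrt_sq (by positivity)).symm
      rw [h0]
      exact Real.sqrt_le_sqrt (by nlinarith)
    simp only [rplus]
    linarith
  have hr0pos : 0 < rplus M a := by linarith
  have hΔ0 : Δk M a (rplus M a) = 0 := by
    simp only [Δk, rplus]
    linear_combination hsq
  have hΔpos : ∀ r ∈ Set.Ioi (rplus M a), 0 < Δk M a r := by
    intro r hr
    have hrr : rplus M a < r := Set.mem_Ioi.mp hr
    have h1 : M + Real.sqrt (M^2 - a^2) < r := by
      simpa [rplus] using hrr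
    have h2 : 0 < r - M - Real.sqrt (M^2 - a^2) := by linarith
    have h3 : 0 < r - M + Real.sqrt (M^2 - a^2) := by linarith
    simp only [Δk]
    nlinarith [mul_pos h2 h3, hsq]
  have hφc : ContinuousOn φ (Set.Ici (rplus M a)) := hφ.continuousOn
  have hφd : ∀ r ∈ Set.Ioi (rplus M a), HasDerivAt φ (deriv φ r) r := by
    intro r hr
    have hrr : rplus M a < r := Set.mem_Ioi.mp hr
    have hmem : Set.Ici (rplus M a) ∈ 𝓝 r := Ici_mem_nhds hrr
    have h1 : DifferentiableWithinAt ℝ φ (Set.Ici (rplus M a)) r :=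
      (hφ r (Set.mem_Ici.mpr hrr.le)).differentiableWithinAt (by simp)
    exact (h1.differentiableAt hmem).hasDerivAt
  have hφdc : ContinuousOn (deriv φ) (Set.Ioi (rplus M a)) :=
    (hφ.mono Set.Ioi_subset_Ici_self).continuousOn_deriv_of_isOpen isOpen_Ioi
      (by exact_mod_cast le_top)
  have hrpos : ∀ r ∈ Set.Ioi (rplus M a), 0 < r := fun r hr =>
    lt_trans hr0pos (Set.mem_Ioi.mp hr)
  have hrapos : ∀ r ∈ Set.Ioi (rplus M a), 0 < r^2 + a^2 := by
    intro r hr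
    have h1 := hrpos r hr
    nlinarith [sq_nonneg a, mul_pos h1 h1]
  have hrM : ∀ r ∈ Set.Ioi (rplus M a), 19*M/10 ≤ r := fun r hr =>
    le_trans hr19 (Set.mem_Ioi.mp hr).le
  -- continuity of the various integrands on the open interval
  have hT1c : ContinuousOn
      (fun r => Δk M a r ^ 2 / (r ^ 2 * (r ^ 2 + a ^ 2)) * deriv φ r ^ 2)
      (Set.Ioi (rplus M a)) := by
    apply ContinuousOn.mul _ (hφdc.pow 2)
    apply ContinuousOn.div
    · apply Continuous.continuousOn
      simp only [Δk]
      fun_prop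
    · fun_prop
    · intro r hr
      exact (mul_pos (pow_pos (hrpos r hr) 2) (hrapos r hr)).ne'
  have hT2c : ContinuousOn (fun r => (r ^ 2)⁻¹ * φ r ^ 2) (Set.Ioi (rplus M a)) := by
    apply ContinuousOn.mul
    · exact ContinuousOn.inv₀ (by fun_prop) fun r hr => (pow_pos (hrpos r hr) 2).ne'
    · exact ((hφc.mono Set.Ioi_subset_Ici_self).pow 2)
  have hGc : ContinuousOn
      (fun r => 1 / 6 * ((9 * r ^ 2 - 46 * M * r + 54 * M ^ 2) / r ^ 4) * φ r ^ 2)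
      (Set.Ioi (rplus M a)) := by
    apply ContinuousOn.mul _ ((hφc.mono Set.Ioi_subset_Ici_self).pow 2)
    apply ContinuousOn.mul continuousOn_const
    exact ContinuousOn.div (by fun_prop) (by fun_prop)
      fun r hr => (pow_pos (hrpos r hr) 4).ne'
  have hfc : ContinuousOn (fun r => WHf M a r) (Set.Ioi (rplus M a)) := by
    have heq : (fun r => WHf M a r) = fun r => WHp M r * Δk M a r / r^4 := by
      funext s; simp [WHf]
    rw [heq]
    apply ContinuousOn.div
    · apply Continuous.continuousOn
      simp only [WHp, Δk]
      fun_prop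
    · fun_prop
    · exact fun r hr => (pow_pos (hrpos r hr) 4).ne'
  have hf'c : ContinuousOn (fun r => WHf' M a r) (Set.Ioi (rplus M a)) := by
    have heq : (fun r => WHf' M a r) = fun r =>
        ((4/5 * Δk M a r + WHp M r * (2*r - 2*M)) * r^4
          - WHp M r * Δk M a r * (4*r^3)) / (r^4)^2 := by
      funext s; simp [WHf']
    rw [heq]
    apply ContinuousOn.div
    · apply Continuous.continuousOn
      simp only [WHp, Δk]
      fun_prop
    · fun_prop
    · exact fun r hr => (pow_pos (pow_pos (hrpos r hr) 4) 2).ne'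
  have hF'c : ContinuousOn
      (fun r => WHf' M a r * φ r ^ 2 + WHf M a r * (2 * φ r * deriv φ r))
      (Set.Ioi (rplus M a)) := by
    apply ContinuousOn.add
    · exact hf'c.mul ((hφc.mono Set.Ioi_subset_Ici_self).pow 2)
    · exact hfc.mul ((continuousOn_const.mul
        (hφc.mono Set.Ioi_subset_Ici_self)).mul hφdc)
  -- integrability of the pieces
  have hT1int : IntegrableOn
      (fun r => Δk M a r ^ 2 / (r ^ 2 * (r ^ 2 + a ^ 2)) * deriv φ r ^ 2)
      (Set.Ioi (rplus M a)) := by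
    apply hint.mono' (hT1c.aestronglyMeasurable measurableSet_Ioi)
    filter_upwards [ae_restrict_mem measurableSet_Ioi] with r hr
    have e1 : 0 ≤ Δk M a r ^ 2 / (r ^ 2 * (r ^ 2 + a ^ 2)) * deriv φ r ^ 2 := by
      have h1 := hrpos r hr
      have h2 := hrapos r hr
      positivity
    have e2 : 0 ≤ (r ^ 2)⁻¹ * φ r ^ 2 := by positivity
    rw [Real.norm_eq_abs, abs_of_nonneg e1]
    linarith
  have hT2int : IntegrableOn (fun r => (r ^ 2)⁻¹ * φ r ^ 2) (Set.Ioi (rplus M a)) := by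
    apply hint.mono' (hT2c.aestronglyMeasurable measurableSet_Ioi)
    filter_upwards [ae_restrict_mem measurableSet_Ioi] with r hr
    have e1 : 0 ≤ Δk M a r ^ 2 / (r ^ 2 * (r ^ 2 + a ^ 2)) * deriv φ r ^ 2 := by
      have h1 := hrpos r hr
      have h2 := hrapos r hr
      positivity
    have e2 : 0 ≤ (r ^ 2)⁻¹ * φ r ^ 2 := by positivity
    rw [Real.norm_eq_abs, abs_of_nonneg e2]
    linarith
  have hGint : IntegrableOn
      (fun r => 1 / 6 * ((9 * r ^ 2 - 46 * M * r + 54 * M ^ 2) / r ^ 4) * φ r ^ 2)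
      (Set.Ioi (rplus M a)) := by
    apply (hT2int.const_mul 19).mono' (hGc.aestronglyMeasurable measurableSet_Ioi)
    filter_upwards [ae_restrict_mem measurableSet_Ioi] with r hr
    have hr1 : 0 < r := hrpos r hr
    have hrM1 : 19*M/10 ≤ r := hrM r hr
    have hMr : M ≤ 10*r/19 := by linarith
    have hb : |9 * r ^ 2 - 46 * M * r + 54 * M ^ 2| ≤ 114 * r ^ 2 := by
      rw [abs_le]
      constructor
      · nlinarith [mul_pos hM hr1, mul_le_mul_of_nonneg_right hMr hr1.le, sq_nonneg M,
          mul_le_mul_of_nonneg_right hMr hM.le]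
      · nlinarith [mul_pos hM hr1, mul_le_mul_of_nonneg_right hMr hr1.le, sq_nonneg M,
          mul_le_mul_of_nonneg_right hMr hM.le,
          mul_le_mul_of_nonneg_left hMr (by positivity : (0:ℝ) ≤ 10*r/19)]
    have h1 : |1 / 6 * ((9 * r ^ 2 - 46 * M * r + 54 * M ^ 2) / r ^ 4)| ≤ 19 * (r ^ 2)⁻¹ := by
      rw [show (1:ℝ) / 6 * ((9 * r ^ 2 - 46 * M * r + 54 * M ^ 2) / r ^ 4)
            = (9 * r ^ 2 - 46 * M * r + 54 * M ^ 2) / (6 * r ^ 4) by ring,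
        abs_div, abs_of_pos (by positivity : (0:ℝ) < 6 * r ^ 4)]
      have h2 : |9 * r ^ 2 - 46 * M * r + 54 * M ^ 2| / (6 * r ^ 4)
          ≤ 114 * r ^ 2 / (6 * r ^ 4) := by gcongr
      refine h2.trans (le_of_eq ?_)
      field_simp
      ring
    rw [Real.norm_eq_abs, abs_mul, abs_of_nonneg (sq_nonneg (φ r))]
    calc |1 / 6 * ((9 * r ^ 2 - 46 * M * r + 54 * M ^ 2) / r ^ 4)| * φ r ^ 2
        ≤ 19 * (r ^ 2)⁻¹ * φ r ^ 2 := mul_le_mul_of_nonneg_right h1 (sq_nonneg _)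
      _ = 19 * ((r ^ 2)⁻¹ * φ r ^ 2) := by ring
  have hRint : IntegrableOn
      (fun r => Δk M a r ^ 2 / (r ^ 2 * (r ^ 2 + a ^ 2)) * deriv φ r ^ 2 +
        1 / 6 * ((9 * r ^ 2 - 46 * M * r + 54 * M ^ 2) / r ^ 4) * φ r ^ 2)
      (Set.Ioi (rplus M a)) := hT1int.add hGint
  have hF'int : IntegrableOn
      (fun r => WHf' M a r * φ r ^ 2 + WHf M a r * (2 * φ r * deriv φ r))
      (Set.Ioi (rplus M a)) := by
    apply (hint.const_mul 3).mono' (hF'c.aestronglyMeasurable measurableSet_Ioi)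
    filter_upwards [ae_restrict_mem measurableSet_Ioi] with r hr
    have hr1 : 0 < r := hrpos r hr
    have hrM1 : 19*M/10 ≤ r := hrM r hr
    have hDpos : 0 < Δk M a r ^ 2 / (r ^ 2 * (r ^ 2 + a ^ 2)) :=
      div_pos (pow_pos (hΔpos r hr) 2) (mul_pos (pow_pos hr1 2) (hrapos r hr))
    have hf' := WHf'_bound M a r hM ha2 hrM1
    have hfsq := WHf_sq_bound M a r hM ha2 hrM1
    obtain ⟨hf'lo, hf'hi⟩ := abs_le.mp hf'
    have hc0 : (0:ℝ) < (r^2)⁻¹ := by positivity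
    rw [Real.norm_eq_abs]
    exact WHabs _ _ _ _ _ _ hDpos hc0 hf' hfsq
  -- fundamental theorem of calculus for the boundary term
  have hFd : ∀ r ∈ Set.Ioi (rplus M a), HasDerivAt (fun s => WHf M a s * φ s ^ 2)
      (WHf' M a r * φ r ^ 2 + WHf M a r * (2 * φ r * deriv φ r)) r := by
    intro r hr
    have h1 := (WHf_hasDerivAt M a r (hrpos r hr).ne').mul ((hφd r hr).pow 2)
    refine h1.congr_deriv ?_
    rw [Pi.pow_apply]
    push_cast
    ring
  have hFtend : Tendsto (fun r => WHf M a r * φ r ^ 2) atTop (𝓝 0) := by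
    have hpoly : Continuous (fun x : ℝ => 4/5*x - 139/50*M*x^2
        + (4/5*a^2 + 59/25*M^2)*x^3 - 59/50*M*a^2*x^4) := by fun_prop
    have h0 : Tendsto (fun r : ℝ => r⁻¹) atTop (𝓝 0) := tendsto_inv_atTop_zero
    have h1 : Tendsto (fun r : ℝ => 4/5*r⁻¹ - 139/50*M*(r^2)⁻¹
        + (4/5*a^2 + 59/25*M^2)*(r^3)⁻¹ - 59/50*M*a^2*(r^4)⁻¹) atTop (𝓝 0) := by
      have h2 := (hpoly.tendsto 0).comp h0
      have h3 : ((fun x : ℝ => 4/5*x - 139/50*M*x^2 + (4/5*a^2 + 59/25*M^2)*x^3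
          - 59/50*M*a^2*x^4) ∘ fun r : ℝ => r⁻¹) = fun r : ℝ => 4/5*r⁻¹ - 139/50*M*(r^2)⁻¹
          + (4/5*a^2 + 59/25*M^2)*(r^3)⁻¹ - 59/50*M*a^2*(r^4)⁻¹ := by
        funext r
        simp only [Function.comp_apply]
        ring
      rw [h3] at h2
      convert h2 using 2
      norm_num
    have h2 : Tendsto (fun r => WHf M a r) atTop (𝓝 0) := by
      apply h1.congr'
      filter_upwards [eventually_gt_atTop 0] with r hr
      simp only [WHf, WHp, Δk]
      field_simp
      ring
    have hg : Tendsto (fun r => |WHf M a r| * B^2) atTop (𝓝 0) := by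
      have h3 := (h2.abs).mul_const (B^2)
      simpa using h3
    apply squeeze_zero_norm' _ hg
    filter_upwards [eventually_ge_atTop (rplus M a)] with r hr
    have h3 : |φ r| ≤ B := hB r (Set.mem_Ici.mpr hr)
    rw [Real.norm_eq_abs, abs_mul, abs_pow]
    exact mul_le_mul_of_nonneg_left (pow_le_pow_left₀ (abs_nonneg _) h3 2) (abs_nonneg _)
  have hFcont0 : ContinuousWithinAt (fun r => WHf M a r * φ r ^ 2)
      (Set.Ici (rplus M a)) (rplus M a) := by
    have heq : (fun r => WHf M a r) = fun r => WHp M r * Δk M a r / r^4 := by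
      funext s; simp [WHf]
    have h4 : ContinuousAt (fun r => WHf M a r) (rplus M a) := by
      rw [heq]
      apply ContinuousAt.div
      · simp only [WHp, Δk]; fun_prop
      · fun_prop
      · exact pow_ne_zero 4 hr0pos.ne'
    exact h4.continuousWithinAt.mul ((hφc (rplus M a) Set.self_mem_Ici).pow 2)
  have hFTC : ∫ r in Set.Ioi (rplus M a),
      (WHf' M a r * φ r ^ 2 + WHf M a r * (2 * φ r * deriv φ r)) = 0 := by
    rw [integral_Ioi_of_hasDerivAt_of_tendsto hFcont0 hFd hF'int hFtend]
    have h5 : WHf M a (rplus M a) = 0 := by simp [WHf, hΔ0]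
    simp [h5]
  -- pointwise nonnegativity of the combined integrand
  have hN : ∀ r ∈ Set.Ioi (rplus M a),
      0 ≤ (Δk M a r ^ 2 / (r ^ 2 * (r ^ 2 + a ^ 2)) * deriv φ r ^ 2 +
          1 / 6 * ((9 * r ^ 2 - 46 * M * r + 54 * M ^ 2) / r ^ 4) * φ r ^ 2)
        - 1/100 * (Δk M a r ^ 2 / (r ^ 2 * (r ^ 2 + a ^ 2)) * deriv φ r ^ 2 +
          (r ^ 2)⁻¹ * φ r ^ 2)
        + (WHf' M a r * φ r ^ 2 + WHf M a r * (2 * φ r * deriv φ r)) := by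
    intro r hr
    have hr1 : 0 < r := hrpos r hr
    have hrM1 : 19*M/10 ≤ r := hrM r hr
    have hDpos : 0 < Δk M a r ^ 2 / (r ^ 2 * (r ^ 2 + a ^ 2)) :=
      div_pos (pow_pos (hΔpos r hr) 2) (mul_pos (pow_pos hr1 2) (hrapos r hr))
    have hQ := WHkey M a r hM ha2 hrM1
    have hident := WH_ident M a r hr1.ne'
    have hW : 100/99 * WHf M a r ^ 2 ≤
        (1/6*((9*r^2-46*M*r+54*M^2)/r^4) - 1/100*(r^2)⁻¹ + WHf' M a r)
          * (Δk M a r ^ 2 / (r ^ 2 * (r ^ 2 + a ^ 2))) := by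
      rw [← sub_nonneg, hident]
      apply div_nonneg (mul_nonneg hQ (sq_nonneg _)) (by positivity)
    exact WHN _ _ _ _ _ _ _ hDpos hW
  -- assemble
  have hsum : (0:ℝ) ≤ ∫ r in Set.Ioi (rplus M a),
      ((Δk M a r ^ 2 / (r ^ 2 * (r ^ 2 + a ^ 2)) * deriv φ r ^ 2 +
          1 / 6 * ((9 * r ^ 2 - 46 * M * r + 54 * M ^ 2) / r ^ 4) * φ r ^ 2)
        - 1/100 * (Δk M a r ^ 2 / (r ^ 2 * (r ^ 2 + a ^ 2)) * deriv φ r ^ 2 +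
          (r ^ 2)⁻¹ * φ r ^ 2)
        + (WHf' M a r * φ r ^ 2 + WHf M a r * (2 * φ r * deriv φ r))) :=
    setIntegral_nonneg measurableSet_Ioi hN
  have hsplit : ∫ r in Set.Ioi (rplus M a),
      ((Δk M a r ^ 2 / (r ^ 2 * (r ^ 2 + a ^ 2)) * deriv φ r ^ 2 +
          1 / 6 * ((9 * r ^ 2 - 46 * M * r + 54 * M ^ 2) / r ^ 4) * φ r ^ 2)
        - 1/100 * (Δk M a r ^ 2 / (r ^ 2 * (r ^ 2 + a ^ 2)) * deriv φ r ^ 2 +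
          (r ^ 2)⁻¹ * φ r ^ 2)
        + (WHf' M a r * φ r ^ 2 + WHf M a r * (2 * φ r * deriv φ r)))
      = ((∫ r in Set.Ioi (rplus M a),
          (Δk M a r ^ 2 / (r ^ 2 * (r ^ 2 + a ^ 2)) * deriv φ r ^ 2 +
            1 / 6 * ((9 * r ^ 2 - 46 * M * r + 54 * M ^ 2) / r ^ 4) * φ r ^ 2))
        - ∫ r in Set.Ioi (rplus M a),
            1/100 * (Δk M a r ^ 2 / (r ^ 2 * (r ^ 2 + a ^ 2)) * deriv φ r ^ 2 +
              (r ^ 2)⁻¹ * φ r ^ 2))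
        + ∫ r in Set.Ioi (rplus M a),
            (WHf' M a r * φ r ^ 2 + WHf M a r * (2 * φ r * deriv φ r)) := by
    have hCL : IntegrableOn
        (fun r => 1/100 * (Δk M a r ^ 2 / (r ^ 2 * (r ^ 2 + a ^ 2)) * deriv φ r ^ 2 +
          (r ^ 2)⁻¹ * φ r ^ 2)) (Set.Ioi (rplus M a)) := hint.const_mul (1/100)
    have hRL : IntegrableOn
        (fun r => (Δk M a r ^ 2 / (r ^ 2 * (r ^ 2 + a ^ 2)) * deriv φ r ^ 2 +
            1 / 6 * ((9 * r ^ 2 - 46 * M * r + 54 * M ^ 2) / r ^ 4) * φ r ^ 2)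
          - 1/100 * (Δk M a r ^ 2 / (r ^ 2 * (r ^ 2 + a ^ 2)) * deriv φ r ^ 2 +
            (r ^ 2)⁻¹ * φ r ^ 2)) (Set.Ioi (rplus M a)) := hRint.sub hCL
    rw [integral_add hRL hF'int, integral_sub hRint hCL]
  have hCmul : ∫ r in Set.Ioi (rplus M a),
      1/100 * (Δk M a r ^ 2 / (r ^ 2 * (r ^ 2 + a ^ 2)) * deriv φ r ^ 2 +
        (r ^ 2)⁻¹ * φ r ^ 2)
      = 1/100 * ∫ r in Set.Ioi (rplus M a),
          (Δk M a r ^ 2 / (r ^ 2 * (r ^ 2 + a ^ 2)) * deriv φ r ^ 2 +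
            (r ^ 2)⁻¹ * φ r ^ 2) := integral_const_mul _ _
  linarith [hsum, hsplit, hCmul, hFTC]

end KerrPaper
end
end

section
/- Positivity of a quadratic form from a positive ODE solution (Step 1 of the Hardy lemma): Let r₀ ∈ ℝ and let A, V : [r₀,∞) → ℝ be smooth with A > 0 on [r₀,∞). Suppose the ordinary differential equation −(A u′)′ + V u = 0 has a smooth positive solution u on [r₀,∞). Then for every smooth function φ : [r₀,∞) → ℝ such that the quantity φ²·A·(u′/u) tends to 0 as r → r₀⁺ and as r → ∞, and for which the integral below converges, one has ∫_{r₀}^{∞} (A·φ′(r)² + V·φ(r)²) dr ≥ 0. -/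
noncomputable section

open MeasureTheory Filter Topology

namespace KerrPaper

/-- **Step 1 of the Hardy lemma: a positive solution of the associated ODE yields
nonnegativity of the quadratic form.** -/
theorem hardy_from_positive_solution (r₀ : ℝ) (A V u : ℝ → ℝ)
    (hA : ContDiffOn ℝ (⊤ : ℕ∞) A (Set.Ici r₀)) (hV : ContDiffOn ℝ (⊤ : ℕ∞) V (Set.Ici r₀))
    (hApos : ∀ r ∈ Set.Ici r₀, 0 < A r)
    (hu : ContDiffOn ℝ (⊤ : ℕ∞) u (Set.Ici r₀)) (hupos : ∀ r ∈ Set.Ici r₀, 0 < u r)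
    (hODE : ∀ r ∈ Set.Ici r₀, deriv (fun s => A s * deriv u s) r = V r * u r) :
    ∀ φ : ℝ → ℝ, ContDiffOn ℝ (⊤ : ℕ∞) φ (Set.Ici r₀) →
      Filter.Tendsto (fun r => φ r ^ 2 * A r * (deriv u r / u r))
        (nhdsWithin r₀ (Set.Ioi r₀)) (nhds 0) →
      Filter.Tendsto (fun r => φ r ^ 2 * A r * (deriv u r / u r)) Filter.atTop (nhds 0) →
      MeasureTheory.IntegrableOn (fun r => A r * deriv φ r ^ 2 + V r * φ r ^ 2)
        (Set.Ioi r₀) →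
        0 ≤ ∫ r in Set.Ioi r₀, (A r * deriv φ r ^ 2 + V r * φ r ^ 2) := by
  intro φ hφ h0 hinf hint
  set S : Set ℝ := Set.Ioi r₀ with hSdef
  have hSo : IsOpen S := isOpen_Ioi
  have hsub : S ⊆ Set.Ici r₀ := Set.Ioi_subset_Ici_self
  have hAS : ContDiffOn ℝ (⊤ : ℕ∞) A S := hA.mono hsub
  have hVS : ContDiffOn ℝ (⊤ : ℕ∞) V S := hV.mono hsub
  have huS : ContDiffOn ℝ (⊤ : ℕ∞) u S := hu.mono hsub
  have hφS : ContDiffOn ℝ (⊤ : ℕ∞) φ S := hφ.mono hsub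
  have hu'S : ContDiffOn ℝ (⊤ : ℕ∞) (deriv u) S :=
    ((contDiffOn_infty_iff_deriv_of_isOpen hSo).1 huS).2
  have hφ'S : ContDiffOn ℝ (⊤ : ℕ∞) (deriv φ) S :=
    ((contDiffOn_infty_iff_deriv_of_isOpen hSo).1 hφS).2
  have hhS : ContDiffOn ℝ (⊤ : ℕ∞) (fun s => A s * deriv u s) S := hAS.mul hu'S
  have hune : ∀ x ∈ S, u x ≠ 0 := fun x hx => ne_of_gt (hupos x (hsub hx))
  -- the boundary function and its derivative
  set w : ℝ → ℝ := fun r => φ r ^ 2 * A r * (deriv u r / u r) with hwdef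
  set W : ℝ → ℝ := fun r =>
    2 * φ r * deriv φ r * (A r * deriv u r / u r) +
      φ r ^ 2 * ((V r * u r * u r - A r * deriv u r * deriv u r) / u r ^ 2) with hWdef
  have hdiffAt : ∀ (f : ℝ → ℝ), ContDiffOn ℝ (⊤ : ℕ∞) f S → ∀ x ∈ S,
      HasDerivAt f (deriv f x) x := by
    intro f hf x hx
    have : DifferentiableAt ℝ f x :=
      (hf.contDiffAt (hSo.mem_nhds hx)).differentiableAt (by simp)
    exact this.hasDerivAt
  have hW : ∀ x ∈ S, HasDerivAt w (W x) x := by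
    intro x hx
    have hφd := hdiffAt φ hφS x hx
    have hsq : HasDerivAt (fun s => φ s ^ 2) (2 * φ x * deriv φ x) x := by
      have := hφd.fun_pow 2
      simpa [mul_comm, mul_assoc, mul_left_comm] using this
    have hhd := hdiffAt (fun s => A s * deriv u s) hhS x hx
    rw [hODE x (hsub hx)] at hhd
    have hud := hdiffAt u huS x hx
    have hdiv : HasDerivAt (fun s => A s * deriv u s / u s)
        ((V x * u x * u x - A x * deriv u x * deriv u x) / u x ^ 2) x := by
      have := hhd.fun_div hud (hune x hx)
      convert this using 1 <;> ring
    have hprod := hsq.fun_mul hdiv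
    have hEq : (fun r => φ r ^ 2 * (A r * deriv u r / u r)) = w := by
      funext r; simp only [hwdef]; ring
    rw [hEq] at hprod
    convert hprod using 1 <;> (simp only [hWdef]; ring)
  have hcontW : ContinuousOn W S := by
    have c1 : ContinuousOn (fun r => 2 * φ r * deriv φ r * (A r * deriv u r / u r)) S := by
      apply ContinuousOn.mul
      · exact (continuousOn_const.mul hφS.continuousOn).mul hφ'S.continuousOn
      · exact (hAS.continuousOn.mul hu'S.continuousOn).div huS.continuousOn hune
    have c2 : ContinuousOn
        (fun r => φ r ^ 2 * ((V r * u r * u r - A r * deriv u r * deriv u r) / u r ^ 2)) S := by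
      apply ContinuousOn.mul
      · exact hφS.continuousOn.pow 2
      · apply ContinuousOn.div
        · exact ((hVS.continuousOn.mul huS.continuousOn).mul huS.continuousOn).sub
            ((hAS.continuousOn.mul hu'S.continuousOn).mul hu'S.continuousOn)
        · exact huS.continuousOn.pow 2
        · intro x hx; exact pow_ne_zero 2 (hune x hx)
    exact c1.add c2
  -- pointwise inequality
  have hle : ∀ x ∈ S, W x ≤ A x * deriv φ x ^ 2 + V x * φ x ^ 2 := by
    intro x hx
    have hu0 : u x ≠ 0 := hune x hx
    have hA0 : 0 < A x := hApos x (hsub hx)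
    have key : A x * deriv φ x ^ 2 + V x * φ x ^ 2 - W x =
        A x * (deriv φ x - φ x * deriv u x / u x) ^ 2 := by
      simp only [hWdef]
      field_simp
      ring
    rw [← sub_nonneg, key]
    exact mul_nonneg hA0.le (sq_nonneg _)
  -- sequences of endpoints
  set aseq : ℕ → ℝ := fun n => r₀ + 1 / (n + 1) with haseq
  set bseq : ℕ → ℝ := fun n => r₀ + (n + 1) with hbseq
  have hagt : ∀ n, r₀ < aseq n := by
    intro n; simp only [haseq]
    have : (0 : ℝ) < 1 / (n + 1) := by positivity
    linarith
  have hab : ∀ n, aseq n ≤ bseq n := by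
    intro n; simp only [haseq, hbseq]
    have h1 : (1 : ℝ) / (n + 1) ≤ 1 := by
      rw [div_le_one (by positivity)]
      have : (0:ℝ) ≤ n := Nat.cast_nonneg n
      linarith
    have : (0:ℝ) ≤ n := Nat.cast_nonneg n
    linarith
  have hIccS : ∀ n, Set.uIcc (aseq n) (bseq n) ⊆ S := by
    intro n
    rw [Set.uIcc_of_le (hab n)]
    intro x hx
    exact lt_of_lt_of_le (hagt n) hx.1
  set f : ℝ → ℝ := fun r => A r * deriv φ r ^ 2 + V r * φ r ^ 2 with hfdef
  -- step inequality
  have step : ∀ n, w (bseq n) - w (aseq n) ≤ ∫ x in Set.Ioc (aseq n) (bseq n), f x := by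
    intro n
    have hWint : IntervalIntegrable W MeasureTheory.volume (aseq n) (bseq n) :=
      (hcontW.mono (hIccS n)).intervalIntegrable
    have hfint : IntervalIntegrable f MeasureTheory.volume (aseq n) (bseq n) := by
      rw [intervalIntegrable_iff_integrableOn_Ioc_of_le (hab n)]
      exact hint.mono_set (fun x hx => lt_of_lt_of_le (hagt n) (le_of_lt hx.1))
    have ftc : ∫ x in aseq n..bseq n, W x = w (bseq n) - w (aseq n) :=
      intervalIntegral.integral_eq_sub_of_hasDerivAt
        (fun x hx => hW x (hIccS n hx)) hWint
    have hmono : ∫ x in aseq n..bseq n, W x ≤ ∫ x in aseq n..bseq n, f x := by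
      apply intervalIntegral.integral_mono_on (hab n) hWint hfint
      intro x hx
      exact hle x (lt_of_lt_of_le (hagt n) hx.1)
    rw [ftc] at hmono
    rwa [intervalIntegral.integral_of_le (hab n)] at hmono
  -- convergence of the set integrals
  have hmonoseq : Monotone (fun n => Set.Ioc (aseq n) (bseq n)) := by
    intro m n hmn
    apply Set.Ioc_subset_Ioc
    · simp only [haseq]
      have : (m:ℝ) + 1 ≤ (n:ℝ) + 1 := by exact_mod_cast Nat.succ_le_succ hmn
      have h2 : 1 / ((n:ℝ) + 1) ≤ 1 / ((m:ℝ) + 1) :=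
        one_div_le_one_div_of_le (by positivity) this
      linarith
    · simp only [hbseq]
      have : (m:ℝ) + 1 ≤ (n:ℝ) + 1 := by exact_mod_cast Nat.succ_le_succ hmn
      linarith
  have hunion : (⋃ n, Set.Ioc (aseq n) (bseq n)) = Set.Ioi r₀ := by
    ext x
    simp only [Set.mem_iUnion, Set.mem_Ioc, Set.mem_Ioi]
    constructor
    · rintro ⟨n, h1, _⟩; exact lt_trans (hagt n) h1
    · intro hx
      obtain ⟨n₁, hn₁⟩ := exists_nat_one_div_lt (sub_pos.mpr hx)
      obtain ⟨n₂, hn₂⟩ := exists_nat_ge (x - r₀)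
      refine ⟨max n₁ n₂, ?_, ?_⟩
      · have : (1:ℝ) / (max n₁ n₂ + 1) ≤ 1 / (n₁ + 1) := by
          apply one_div_le_one_div_of_le (by positivity)
          have : (n₁:ℝ) ≤ max n₁ n₂ := by exact_mod_cast le_max_left n₁ n₂
          linarith
        simp only [haseq]
        linarith
      · have : (n₂:ℝ) ≤ max n₁ n₂ := by exact_mod_cast le_max_right n₁ n₂
        simp only [hbseq]
        linarith
  have hI : Filter.Tendsto (fun n => ∫ x in Set.Ioc (aseq n) (bseq n), f x)
      Filter.atTop (nhds (∫ x in Set.Ioi r₀, f x)) := by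
    have := MeasureTheory.tendsto_setIntegral_of_monotone
      (fun n => measurableSet_Ioc) hmonoseq (by rw [hunion]; exact hint)
    rwa [hunion] at this
  -- limit of boundary terms
  have hta : Filter.Tendsto aseq Filter.atTop (nhdsWithin r₀ (Set.Ioi r₀)) := by
    apply tendsto_nhdsWithin_of_tendsto_nhds_of_eventually_within
    · rw [haseq]
      have : Filter.Tendsto (fun n : ℕ => r₀ + 1 / ((n : ℝ) + 1)) Filter.atTop
          (nhds (r₀ + 0)) :=
        tendsto_const_nhds.add tendsto_one_div_add_atTop_nhds_zero_nat
      simpa using this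
    · exact Filter.Eventually.of_forall (fun n => hagt n)
  have htb : Filter.Tendsto bseq Filter.atTop Filter.atTop := by
    apply Filter.tendsto_atTop_add_const_left
    have : Filter.Tendsto (fun n : ℕ => (n : ℝ)) Filter.atTop Filter.atTop :=
      tendsto_natCast_atTop_atTop
    exact Filter.tendsto_atTop_add_const_right _ 1 this
  have hwa : Filter.Tendsto (fun n => w (aseq n)) Filter.atTop (nhds 0) := h0.comp hta
  have hwb : Filter.Tendsto (fun n => w (bseq n)) Filter.atTop (nhds 0) := hinf.comp htb
  have hlim : Filter.Tendsto (fun n => w (bseq n) - w (aseq n)) Filter.atTop (nhds 0) := by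
    simpa using hwb.sub hwa
  exact le_of_tendsto_of_tendsto' hlim hI step

end KerrPaper
end
end
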